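/- Every nonzero element of D is a unit; that is, the quaternion algebra D of discriminant 15 is a division ring. -/

import Mathlib

lemma mod3_aux : ∀ a c : ZMod 3, a^2 = 2*c^2 → a = 0 ∧ c = 0 := by decide

lemma int_aniso : ∀ s : ℕ, ∀ a b c d : ℤ,
    a.natAbs + b.natAbs + c.natAbs + d.natAbs ≤ s →
    a^2 + 3*b^2 - 5*c^2 - 15*d^2 = 0 → a = 0 ∧ b = 0 ∧ c = 0 ∧ d = 0 := by
  intro s
  induction s using Nat.strong_induction_on with
  | _ s IH =>
    intro a b c d hs h
    have h3ac : ((a : ZMod 3))^2 = 2*((c : ZMod 3))^2 := by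
      have : ((a^2 + 3*b^2 - 5*c^2 - 15*d^2 : ℤ) : ZMod 3) = 0 := by rw [h]; simp
      push_cast at this
      have e3 : (3 : ZMod 3) = 0 := by decide
      linear_combination this - b^2*e3 + c^2*e3 + 5*d^2*e3
    obtain ⟨ha0, hc0⟩ := mod3_aux _ _ h3ac
    obtain ⟨a₁, rfl⟩ : (3 : ℤ) ∣ a := by
      exact_mod_cast (ZMod.intCast_zmod_eq_zero_iff_dvd a 3).mp ha0
    obtain ⟨c₁, rfl⟩ : (3 : ℤ) ∣ c := by
      exact_mod_cast (ZMod.intCast_zmod_eq_zero_iff_dvd c 3).mp hc0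
    have h3bd : ((b : ZMod 3))^2 = 2*((d : ZMod 3))^2 := by
      have h2 : 3*a₁^2 + b^2 - 15*c₁^2 - 5*d^2 = 0 := by linarith [h]
      have : ((3*a₁^2 + b^2 - 15*c₁^2 - 5*d^2 : ℤ) : ZMod 3) = 0 := by rw [h2]; simp
      push_cast at this
      have e3 : (3 : ZMod 3) = 0 := by decide
      linear_combination this - a₁^2*e3 + 5*c₁^2*e3 + d^2*e3
    obtain ⟨hb0, hd0⟩ := mod3_aux _ _ h3bd
    obtain ⟨b₁, rfl⟩ : (3 : ℤ) ∣ b := by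
      exact_mod_cast (ZMod.intCast_zmod_eq_zero_iff_dvd b 3).mp hb0
    obtain ⟨d₁, rfl⟩ : (3 : ℤ) ∣ d := by
      exact_mod_cast (ZMod.intCast_zmod_eq_zero_iff_dvd d 3).mp hd0
    have h' : a₁^2 + 3*b₁^2 - 5*c₁^2 - 15*d₁^2 = 0 := by linarith [h]
    set m := a₁.natAbs + b₁.natAbs + c₁.natAbs + d₁.natAbs with hm
    rcases Nat.eq_zero_or_pos m with hm0 | hmpos
    · simp only [m, Nat.add_eq_zero, Int.natAbs_eq_zero] at hm0
      obtain ⟨⟨⟨ha, hb⟩, hc⟩, hd⟩ := hm0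
      subst ha hb hc hd; simp
    · have hlt : m < s := by
        have : (3*a₁).natAbs + (3*b₁).natAbs + (3*c₁).natAbs + (3*d₁).natAbs = 3 * m := by
          simp [Int.natAbs_mul]; ring
        omega
      obtain ⟨h1, h2, h3, h4⟩ := IH m hlt a₁ b₁ c₁ d₁ le_rfl h'
      subst h1 h2 h3 h4; simp

lemma rat_aniso (a b c d : ℚ) (h : a^2 + 3*b^2 - 5*c^2 - 15*d^2 = 0) :
    a = 0 ∧ b = 0 ∧ c = 0 ∧ d = 0 := by
  have ha : (a.num : ℚ) = a * a.den := by
    exact ((eq_div_iff (by exact_mod_cast a.den_ne_zero : (a.den:ℚ) ≠ 0)).mp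
      (Rat.num_div_den a).symm).symm
  have hb : (b.num : ℚ) = b * b.den := by
    exact ((eq_div_iff (by exact_mod_cast b.den_ne_zero : (b.den:ℚ) ≠ 0)).mp
      (Rat.num_div_den b).symm).symm
  have hc : (c.num : ℚ) = c * c.den := by
    exact ((eq_div_iff (by exact_mod_cast c.den_ne_zero : (c.den:ℚ) ≠ 0)).mp
      (Rat.num_div_den c).symm).symm
  have hd : (d.num : ℚ) = d * d.den := by
    exact ((eq_div_iff (by exact_mod_cast d.den_ne_zero : (d.den:ℚ) ≠ 0)).mp
      (Rat.num_div_den d).symm).symm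
  set A : ℤ := a.num * (b.den * c.den * d.den) with hA
  set B : ℤ := b.num * (a.den * c.den * d.den) with hB
  set C : ℤ := c.num * (a.den * b.den * d.den) with hC
  set D : ℤ := d.num * (a.den * b.den * c.den) with hD
  have key : A^2 + 3*B^2 - 5*C^2 - 15*D^2 = 0 := by
    have : ((A^2 + 3*B^2 - 5*C^2 - 15*D^2 : ℤ) : ℚ) = 0 := by
      push_cast [hA, hB, hC, hD]
      rw [ha, hb, hc, hd]
      linear_combination ((a.den : ℚ) * b.den * c.den * d.den)^2 * h
    exact_mod_cast this
  obtain ⟨h1, h2, h3, h4⟩ := int_aniso _ A B C D le_rfl key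
  have hdens : (a.den : ℤ) ≠ 0 ∧ (b.den : ℤ) ≠ 0 ∧ (c.den : ℤ) ≠ 0 ∧ (d.den : ℤ) ≠ 0 := by
    refine ⟨?_, ?_, ?_, ?_⟩ <;> exact_mod_cast Rat.den_ne_zero _
  obtain ⟨da, db, dc, dd⟩ := hdens
  refine ⟨?_, ?_, ?_, ?_⟩
  · have : a.num = 0 := by
      rcases mul_eq_zero.mp h1 with h' | h'
      · exact h'
      · exact absurd h' (by positivity)
    exact Rat.zero_iff_num_zero.mpr this
  · have : b.num = 0 := by
      rcases mul_eq_zero.mp h2 with h' | h'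
      · exact h'
      · exact absurd h' (by positivity)
    exact Rat.zero_iff_num_zero.mpr this
  · have : c.num = 0 := by
      rcases mul_eq_zero.mp h3 with h' | h'
      · exact h'
      · exact absurd h' (by positivity)
    exact Rat.zero_iff_num_zero.mpr this
  · have : d.num = 0 := by
      rcases mul_eq_zero.mp h4 with h' | h'
      · exact h'
      · exact absurd h' (by positivity)
    exact Rat.zero_iff_num_zero.mpr this

open Quaternion

/-- Every nonzero element of the quaternion algebra `D = ℍ[ℚ, -3, 5]`
of discriminant 15 is a unit; i.e. `D` is a division ring. -/
theorem quaternion_disc15_isUnit_of_ne_zero (q : ℍ[ℚ, -3, 5]) (hq : q ≠ 0) : IsUnit q := by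
  set n : ℚ := q.re^2 + 3*q.imI^2 - 5*q.imJ^2 - 15*q.imK^2 with hn
  have key : q * star q = (n : ℍ[ℚ, -3, 5]) := by
    ext <;> simp [QuaternionAlgebra.re_mul, QuaternionAlgebra.imI_mul,
      QuaternionAlgebra.imJ_mul, QuaternionAlgebra.imK_mul, hn,
      ← QuaternionAlgebra.coe_pow, QuaternionAlgebra.re_ofNat, QuaternionAlgebra.imI_ofNat,
      QuaternionAlgebra.imJ_ofNat, QuaternionAlgebra.imK_ofNat] <;> ring
  have key2 : star q * q = (n : ℍ[ℚ, -3, 5]) := by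
    ext <;> simp [QuaternionAlgebra.re_mul, QuaternionAlgebra.imI_mul,
      QuaternionAlgebra.imJ_mul, QuaternionAlgebra.imK_mul, hn,
      ← QuaternionAlgebra.coe_pow, QuaternionAlgebra.re_ofNat, QuaternionAlgebra.imI_ofNat,
      QuaternionAlgebra.imJ_ofNat, QuaternionAlgebra.imK_ofNat] <;> ring
  have hn0 : n ≠ 0 := by
    intro h0
    obtain ⟨h1, h2, h3, h4⟩ := rat_aniso q.re q.imI q.imJ q.imK (by linarith [h0, hn])
    exact hq (by ext <;> assumption)
  refine isUnit_iff_exists.mpr ⟨(n⁻¹ : ℚ) • star q, ?_, ?_⟩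
  · rw [Algebra.mul_smul_comm, key, ← QuaternionAlgebra.coe_smul, smul_eq_mul,
      inv_mul_cancel₀ hn0, QuaternionAlgebra.coe_one]
  · rw [Algebra.smul_mul_assoc, key2, ← QuaternionAlgebra.coe_smul, smul_eq_mul,
      inv_mul_cancel₀ hn0, QuaternionAlgebra.coe_one]
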